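/- Let Y and C be real symmetric n×n matrices with Y a positive definite density matrix (Y ≻ 0, Tr Y = 1) and 0 ⪯ C ⪯ I, and let η ≥ 0. Then η·Tr(Y·C) − η²/2 + ln(Tr(exp(ln Y − η C))) ≤ 0. -/

import Mathlib

open Matrix NormedSpace Filter Topology

namespace GT14

set_option linter.unusedSectionVars false
set_option linter.deprecated false
set_option linter.unusedVariables false
set_option linter.unnecessarySimpa false
set_option maxHeartbeats 1000000

section Banach
variable {𝔸 : Type*} [NormedRing 𝔸] [NormOneClass 𝔸] [NormedAlgebra ℝ 𝔸] [CompleteSpace 𝔸]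

lemma norm_exp_le' (x : 𝔸) : ‖exp x‖ ≤ Real.exp ‖x‖ := by
  rw [exp_eq_tsum ℝ]
  calc ‖∑' n : ℕ, ((n.factorial : ℝ))⁻¹ • x ^ n‖ ≤ ∑' n : ℕ, ‖((n.factorial : ℝ))⁻¹ • x ^ n‖ :=
        norm_tsum_le_tsum_norm (norm_expSeries_summable' x)
    _ ≤ ∑' n : ℕ, ‖x‖ ^ n / n.factorial := by
        refine Summable.tsum_le_tsum (fun n => ?_) (norm_expSeries_summable' x)
          (Real.summable_pow_div_factorial _)
        rw [norm_smul, Real.norm_eq_abs, abs_of_nonneg (by positivity), div_eq_inv_mul]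
        exact mul_le_mul_of_nonneg_left (norm_pow_le x n) (by positivity)
    _ = Real.exp ‖x‖ := by rw [Real.exp_eq_exp_ℝ, exp_eq_tsum_div]

lemma norm_exp_sub_one_sub_le (x : 𝔸) :
    ‖exp x - 1 - x‖ ≤ ‖x‖ ^ 2 * Real.exp ‖x‖ := by
  have hs : Summable fun n : ℕ => ((n.factorial : ℝ))⁻¹ • x ^ n := expSeries_summable' x
  have h2 := Summable.sum_add_tsum_nat_add 2 hs
  have hsum : ∑ i ∈ Finset.range 2, ((i.factorial : ℝ))⁻¹ • x ^ i = 1 + x := by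
    simp [Finset.sum_range_succ, Nat.factorial]
  have hexp : exp x - 1 - x = ∑' n : ℕ, (((n + 2).factorial : ℝ))⁻¹ • x ^ (n + 2) := by
    rw [exp_eq_tsum ℝ]; simp only []; rw [← h2, hsum]; abel
  rw [hexp]
  have hnorm_sum : Summable fun n : ℕ => ‖(((n + 2).factorial : ℝ))⁻¹ • x ^ (n + 2)‖ :=
    (summable_nat_add_iff 2).mpr (norm_expSeries_summable' x)
  calc ‖∑' n : ℕ, (((n + 2).factorial : ℝ))⁻¹ • x ^ (n + 2)‖
      ≤ ∑' n : ℕ, ‖(((n + 2).factorial : ℝ))⁻¹ • x ^ (n + 2)‖ := norm_tsum_le_tsum_norm hnorm_sum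
    _ ≤ ∑' n : ℕ, ‖x‖ ^ 2 * (‖x‖ ^ n / n.factorial) := by
        refine Summable.tsum_le_tsum (fun n => ?_) hnorm_sum
          ((Real.summable_pow_div_factorial _).mul_left _)
        rw [norm_smul, Real.norm_eq_abs, abs_of_nonneg (by positivity)]
        have h1 : ‖x ^ (n + 2)‖ ≤ ‖x‖ ^ (n + 2) := norm_pow_le x (n + 2)
        have h2 : ((n + 2).factorial : ℝ)⁻¹ ≤ ((n.factorial : ℝ))⁻¹ := by
          apply inv_anti₀ (by positivity)
          exact_mod_cast Nat.factorial_le (by omega)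
        calc ((n + 2).factorial : ℝ)⁻¹ * ‖x ^ (n + 2)‖ ≤ ((n.factorial : ℝ))⁻¹ * ‖x‖ ^ (n + 2) := by
              apply mul_le_mul h2 h1 (norm_nonneg _) (by positivity)
          _ = ‖x‖ ^ 2 * (‖x‖ ^ n / n.factorial) := by rw [pow_add]; ring
    _ = ‖x‖ ^ 2 * ∑' n : ℕ, ‖x‖ ^ n / n.factorial := tsum_mul_left
    _ = ‖x‖ ^ 2 * Real.exp ‖x‖ := by rw [Real.exp_eq_exp_ℝ, exp_eq_tsum_div]

lemma norm_pow_sub_pow_le' (E F : 𝔸) (c : ℝ) (hE : ‖E‖ ≤ c) (hF : ‖F‖ ≤ c) (hc : 1 ≤ c)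
    (p : ℕ) : ‖E ^ p - F ^ p‖ ≤ p * c ^ p * ‖E - F‖ := by
  induction p with
  | zero => simp
  | succ p ih =>
    have key : E ^ (p + 1) - F ^ (p + 1) = E ^ p * (E - F) + (E ^ p - F ^ p) * F := by
      noncomm_ring
    have hc0 : (0 : ℝ) ≤ c := le_trans zero_le_one hc
    have hEp : ‖E ^ p‖ ≤ c ^ p := le_trans (norm_pow_le E p) (pow_le_pow_left₀ (norm_nonneg E) hE p)
    have hcp : c ^ p ≤ c ^ (p + 1) := pow_le_pow_right₀ hc (Nat.le_succ p)
    calc ‖E ^ (p + 1) - F ^ (p + 1)‖ ≤ ‖E ^ p * (E - F)‖ + ‖(E ^ p - F ^ p) * F‖ := by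
          rw [key]; exact norm_add_le _ _
      _ ≤ ‖E ^ p‖ * ‖E - F‖ + ‖E ^ p - F ^ p‖ * ‖F‖ := by
          gcongr <;> exact norm_mul_le _ _
      _ ≤ c ^ (p + 1) * ‖E - F‖ + (p * c ^ p * ‖E - F‖) * c :=
          add_le_add (mul_le_mul_of_nonneg_right (hEp.trans hcp) (norm_nonneg _))
            (mul_le_mul ih hF (norm_nonneg _) (by positivity))
      _ = ((p : ℝ) + 1) * c ^ (p + 1) * ‖E - F‖ := by rw [pow_succ]; ring
      _ = ((p + 1 : ℕ) : ℝ) * c ^ (p + 1) * ‖E - F‖ := by push_cast; ring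




lemma trotter (a b : 𝔸) (p : ℕ) (hp : 1 ≤ p) :
    ‖exp (a + b) - (exp ((p : ℝ)⁻¹ • a) * exp ((p : ℝ)⁻¹ • b)) ^ p‖
      ≤ Real.exp (‖a‖ + ‖b‖) * Real.exp (‖a‖ + ‖b‖) * (‖a‖ + ‖b‖) ^ 2 * (4 + (‖a‖ + ‖b‖)) / p := by
  have hp0 : (0 : ℝ) < p := by exact_mod_cast hp
  have hpne : (p : ℝ) ≠ 0 := ne_of_gt hp0
  set x := (p : ℝ)⁻¹ • a with hxdef
  set y := (p : ℝ)⁻¹ • b with hydef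
  set u := ‖x‖ with hu
  set v := ‖y‖ with hv
  set σ := ‖a‖ + ‖b‖ with hσ
  have hu0 : 0 ≤ u := norm_nonneg _
  have hv0 : 0 ≤ v := norm_nonneg _
  have hσ0 : 0 ≤ σ := by positivity
  have hxval : u = ‖a‖ / p := by
    rw [hu, hxdef, norm_smul, Real.norm_eq_abs, abs_of_nonneg (by positivity), div_eq_inv_mul]
  have hyval : v = ‖b‖ / p := by
    rw [hv, hydef, norm_smul, Real.norm_eq_abs, abs_of_nonneg (by positivity), div_eq_inv_mul]
  have hs : u + v = σ / p := by rw [hxval, hyval, hσ, add_div]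
  have hsle : u + v ≤ σ := by
    rw [hs]; exact div_le_self hσ0 (by exact_mod_cast hp)
  set E := exp (x + y) with hEdef
  set F := exp x * exp y with hFdef
  have hxy : x + y = (p : ℝ)⁻¹ • (a + b) := by rw [hxdef, hydef, smul_add]
  have hEp : E ^ p = exp (a + b) := by
    letI : NormedAlgebra ℚ 𝔸 := NormedAlgebra.restrictScalars ℚ ℝ 𝔸
    rw [hEdef, ← NormedSpace.exp_nsmul, hxy, ← Nat.cast_smul_eq_nsmul ℝ p, smul_smul,
      mul_inv_cancel₀ hpne, one_smul]
  have hxyn : ‖x + y‖ ≤ u + v := norm_add_le _ _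
  -- bound ‖E - F‖
  have hE1 : ‖E - 1 - (x + y)‖ ≤ (u + v) ^ 2 * Real.exp (u + v) := by
    refine (norm_exp_sub_one_sub_le (x + y)).trans ?_
    have h1 : ‖x + y‖ ^ 2 ≤ (u + v) ^ 2 := by gcongr
    have h2 : Real.exp ‖x + y‖ ≤ Real.exp (u + v) := Real.exp_le_exp.2 hxyn
    exact mul_le_mul h1 h2 (Real.exp_pos _).le (by positivity)
  have hF1 : ‖F - 1 - (x + y)‖
      ≤ v ^ 2 * Real.exp v + u * v + u * (v ^ 2 * Real.exp v)
        + u ^ 2 * Real.exp u * Real.exp v := by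
    have key : F - 1 - (x + y) = (exp y - 1 - y) + x * y + x * (exp y - 1 - y)
        + (exp x - 1 - x) * exp y := by
      rw [hFdef]; noncomm_ring
    rw [key]
    have hRy := norm_exp_sub_one_sub_le y
    have hRx := norm_exp_sub_one_sub_le x
    have hey := norm_exp_le' (𝔸 := 𝔸) y
    have ta : ‖exp y - 1 - y‖ ≤ v ^ 2 * Real.exp v := hRy
    have tb : ‖x * y‖ ≤ u * v := norm_mul_le _ _
    have tc : ‖x * (exp y - 1 - y)‖ ≤ u * (v ^ 2 * Real.exp v) :=
      le_trans (norm_mul_le _ _) (mul_le_mul_of_nonneg_left hRy hu0)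
    have td : ‖(exp x - 1 - x) * exp y‖ ≤ u ^ 2 * Real.exp u * Real.exp v :=
      le_trans (norm_mul_le _ _) (mul_le_mul hRx hey (norm_nonneg _) (by positivity))
    have n1 : ‖exp y - 1 - y + x * y + x * (exp y - 1 - y) + (exp x - 1 - x) * exp y‖
        ≤ ‖exp y - 1 - y‖ + ‖x * y‖ + ‖x * (exp y - 1 - y)‖
          + ‖(exp x - 1 - x) * exp y‖ := by
      refine le_trans (norm_add_le _ _) ?_
      refine add_le_add_left (le_trans (norm_add_le _ _) (add_le_add_left (norm_add_le _ _) _)) _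
    exact le_trans n1 (by linarith)
  have hEF : ‖E - F‖ ≤ (u + v) ^ 2 * Real.exp (u + v) * (4 + (u + v)) := by
    have h0 : ‖E - F‖ ≤ ‖E - 1 - (x + y)‖ + ‖F - 1 - (x + y)‖ := by
      have : E - F = (E - 1 - (x + y)) - (F - 1 - (x + y)) := by abel
      rw [this]; exact norm_sub_le _ _
    have hexp_uv : Real.exp u * Real.exp v = Real.exp (u + v) := (Real.exp_add u v).symm
    have h1 : Real.exp v ≤ Real.exp (u + v) := Real.exp_le_exp.2 (by linarith)
    have h2 : (1 : ℝ) ≤ Real.exp (u + v) := Real.one_le_exp (by linarith)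
    have hvuv : v ≤ u + v := by linarith
    have huuv : u ≤ u + v := by linarith
    have epos : (0:ℝ) < Real.exp (u + v) := Real.exp_pos _
    have t1 : v ^ 2 * Real.exp v ≤ (u + v) ^ 2 * Real.exp (u + v) := by
      apply mul_le_mul (by gcongr) h1 (Real.exp_pos _).le (by positivity)
    have t2 : u * v ≤ (u + v) ^ 2 * Real.exp (u + v) := by nlinarith
    have t3 : u * (v ^ 2 * Real.exp v) ≤ (u + v) * ((u + v) ^ 2 * Real.exp (u + v)) := by
      apply mul_le_mul huuv t1 (by positivity) (by positivity)
    have t4 : u ^ 2 * Real.exp u * Real.exp v ≤ (u + v) ^ 2 * Real.exp (u + v) := by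
      rw [mul_assoc, hexp_uv]
      apply mul_le_mul_of_nonneg_right (by gcongr) epos.le
    calc ‖E - F‖ ≤ ‖E - 1 - (x + y)‖ + ‖F - 1 - (x + y)‖ := h0
      _ ≤ (u + v) ^ 2 * Real.exp (u + v)
          + (v ^ 2 * Real.exp v + u * v + u * (v ^ 2 * Real.exp v)
            + u ^ 2 * Real.exp u * Real.exp v) := add_le_add hE1 hF1
      _ ≤ (u + v) ^ 2 * Real.exp (u + v) * (4 + (u + v)) := by nlinarith
  -- norms of E and F
  have hEn : ‖E‖ ≤ Real.exp (u + v) :=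
    le_trans (norm_exp_le' _) (Real.exp_le_exp.2 hxyn)
  have hFn : ‖F‖ ≤ Real.exp (u + v) := by
    rw [hFdef, Real.exp_add]
    exact le_trans (norm_mul_le _ _)
      (mul_le_mul (norm_exp_le' _) (norm_exp_le' _) (norm_nonneg _) (Real.exp_pos _).le)
  have hc1 : (1 : ℝ) ≤ Real.exp (u + v) := Real.one_le_exp (by linarith)
  have main := norm_pow_sub_pow_le' E F (Real.exp (u + v)) hEn hFn hc1 p
  rw [hEp] at main
  have hcp : Real.exp (u + v) ^ p = Real.exp σ := by
    rw [← Real.exp_nat_mul, hs]; congr 1; field_simp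
  have final1 : ‖exp (a + b) - F ^ p‖
      ≤ (p : ℝ) * Real.exp σ * ((u + v) ^ 2 * Real.exp (u + v) * (4 + (u + v))) := by
    refine main.trans ?_
    rw [hcp]
    exact mul_le_mul_of_nonneg_left hEF (by positivity)
  refine final1.trans ?_
  rw [hs]
  have expo : Real.exp (σ / p) ≤ Real.exp σ :=
    Real.exp_le_exp.2 (div_le_self hσ0 (by exact_mod_cast hp))
  have h4s : 4 + σ / p ≤ 4 + σ := by
    have := div_le_self hσ0 (show (1:ℝ) ≤ p by exact_mod_cast hp)
    linarith
  have lhs_eq : (p : ℝ) * Real.exp σ * ((σ / p) ^ 2 * Real.exp (σ / p) * (4 + σ / p))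
      = Real.exp σ * Real.exp (σ / p) * σ ^ 2 * (4 + σ / p) / p := by
    field_simp
  rw [lhs_eq]
  have hnum : Real.exp σ * Real.exp (σ / p) * σ ^ 2 * (4 + σ / p)
      ≤ Real.exp σ * Real.exp σ * σ ^ 2 * (4 + σ) := by
    have h1 : Real.exp σ * Real.exp (σ / p) * σ ^ 2 ≤ Real.exp σ * Real.exp σ * σ ^ 2 := by
      have := mul_le_mul_of_nonneg_left expo (Real.exp_pos σ).le
      exact mul_le_mul_of_nonneg_right this (by positivity)
    have h2 : (0:ℝ) ≤ 4 + σ / p := by positivity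
    calc Real.exp σ * Real.exp (σ / p) * σ ^ 2 * (4 + σ / p)
        ≤ Real.exp σ * Real.exp σ * σ ^ 2 * (4 + σ / p) := mul_le_mul_of_nonneg_right h1 h2
      _ ≤ Real.exp σ * Real.exp σ * σ ^ 2 * (4 + σ) := by
          apply mul_le_mul_of_nonneg_left h4s (by positivity)
  exact div_le_div_of_nonneg_right hnum hp0.le |>.trans_eq rfl

end Banach

variable {m : Type*} [Fintype m] [DecidableEq m]

lemma trace_transpose_mul_self_eq (M : Matrix m m ℝ) :
    (Mᵀ * M).trace = ∑ i, ∑ j, (M j i) ^ 2 := by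
  simp [Matrix.trace, Matrix.mul_apply, Matrix.diag, sq]

lemma trace_transpose_mul_self_nonneg (M : Matrix m m ℝ) : 0 ≤ (Mᵀ * M).trace := by
  rw [trace_transpose_mul_self_eq]; positivity

lemma trace_CS (M N : Matrix m m ℝ) :
    (M * N).trace ≤ Real.sqrt ((Mᵀ * M).trace) * Real.sqrt ((Nᵀ * N).trace) := by
  have key : ((M * N).trace) ^ 2 ≤ ((Mᵀ * M).trace) * ((Nᵀ * N).trace) := by
    have h := Finset.sum_mul_sq_le_sq_mul_sq (Finset.univ ×ˢ Finset.univ)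
      (fun p : m × m => M p.1 p.2) (fun p : m × m => N p.2 p.1)
    have e1 : (M * N).trace = ∑ p ∈ Finset.univ ×ˢ Finset.univ,
        (fun p : m × m => M p.1 p.2) p * (fun p : m × m => N p.2 p.1) p := by
      rw [Finset.sum_product]
      simp [Matrix.trace, Matrix.mul_apply, Matrix.diag]
    have e2 : (Mᵀ * M).trace = ∑ p ∈ Finset.univ ×ˢ Finset.univ,
        ((fun p : m × m => M p.1 p.2) p) ^ 2 := by
      rw [Finset.sum_product, trace_transpose_mul_self_eq]
      rw [Finset.sum_comm]
    have e3 : (Nᵀ * N).trace = ∑ p ∈ Finset.univ ×ˢ Finset.univ,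
        ((fun p : m × m => N p.2 p.1) p) ^ 2 := by
      rw [Finset.sum_product, trace_transpose_mul_self_eq]
    rw [e1, e2, e3]
    exact h
  calc (M * N).trace ≤ |(M * N).trace| := le_abs_self _
    _ = Real.sqrt (((M * N).trace) ^ 2) := (Real.sqrt_sq_eq_abs _).symm
    _ ≤ Real.sqrt (((Mᵀ * M).trace) * ((Nᵀ * N).trace)) := Real.sqrt_le_sqrt key
    _ = _ := Real.sqrt_mul (trace_transpose_mul_self_nonneg M) _

lemma trace_pow_mul_comm (A B : Matrix m m ℝ) (p : ℕ) (hp : p ≠ 0) :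
    ((A * B) ^ p).trace = ((B * A) ^ p).trace := by
  obtain ⟨q, rfl⟩ : ∃ q, p = q + 1 :=
    ⟨p - 1, (Nat.succ_pred_eq_of_pos (Nat.pos_of_ne_zero hp)).symm⟩
  have key : ∀ q : ℕ, (A * B) ^ (q + 1) = A * (B * A) ^ q * B := by
    intro q
    induction q with
    | zero => simp [Matrix.mul_assoc]
    | succ q ih => rw [pow_succ, ih, pow_succ]; noncomm_ring
  rw [key, Matrix.trace_mul_cycle, ← pow_succ']

lemma trace_pow_conj (P A Q : Matrix m m ℝ) (p : ℕ) (hp : p ≠ 0) :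
    ((P * A * Q) ^ p).trace = ((A * (Q * P)) ^ p).trace := by
  rw [trace_pow_mul_comm (P * A) Q p hp, ← Matrix.mul_assoc,
    trace_pow_mul_comm (Q * P) A p hp]

lemma trace_even_pow_nonneg (X : Matrix m m ℝ) (hX : X.IsSymm) (k : ℕ) :
    0 ≤ (X ^ 2 ^ (k + 1)).trace := by
  have h : X ^ 2 ^ (k + 1) = (X ^ 2 ^ k)ᵀ * X ^ 2 ^ k := by
    rw [Matrix.transpose_pow, hX.eq, ← pow_add, pow_succ, mul_two]
  rw [h]
  exact trace_transpose_mul_self_nonneg _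

lemma CD (k : ℕ) :
    (∀ S : Matrix m m ℝ, ((Sᵀ) ^ 2 ^ k * S ^ 2 ^ k).trace ≤ ((Sᵀ * S) ^ 2 ^ k).trace) ∧
    (∀ G H : Matrix m m ℝ, G.IsSymm → H.IsSymm →
      ((G * H) ^ 2 ^ k).trace ≤ (G ^ 2 ^ k * H ^ 2 ^ k).trace) := by
  induction k with
  | zero => constructor <;> intros <;> simp
  | succ k ih =>
    obtain ⟨ihC, ihD⟩ := ih
    have hpow : ∀ x : Matrix m m ℝ, x ^ 2 ^ (k + 1) = (x ^ 2) ^ 2 ^ k := by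
      intro x; rw [← pow_mul, pow_succ']
    have hsplit : ∀ x : Matrix m m ℝ, x ^ 2 ^ (k + 1) = x ^ 2 ^ k * x ^ 2 ^ k := by
      intro x; rw [← pow_add, pow_succ, mul_two]
    have hne : (2 : ℕ) ^ k ≠ 0 := by positivity
    constructor
    · intro S
      have symG : (Sᵀ * S).IsSymm := by
        unfold Matrix.IsSymm; rw [Matrix.transpose_mul, Matrix.transpose_transpose]
      have symH : (S * Sᵀ).IsSymm := by
        unfold Matrix.IsSymm; rw [Matrix.transpose_mul, Matrix.transpose_transpose]
      have e0 : ((Sᵀ) ^ 2 ^ (k + 1) * S ^ 2 ^ (k + 1)).trace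
          = (((S ^ 2)ᵀ) ^ 2 ^ k * (S ^ 2) ^ 2 ^ k).trace := by
        rw [hpow, hpow, Matrix.transpose_pow]
      have e1 : (((S ^ 2)ᵀ * S ^ 2) ^ 2 ^ k).trace
          = (((Sᵀ * S) * (S * Sᵀ)) ^ 2 ^ k).trace := by
        have : (S ^ 2)ᵀ * S ^ 2 = Sᵀ * (Sᵀ * S) * S := by
          rw [Matrix.transpose_pow]; simp [sq, Matrix.mul_assoc]
        rw [this, trace_pow_conj _ _ _ _ hne]
      have e2 : ((Sᵀ * S) ^ 2 ^ k * (S * Sᵀ) ^ 2 ^ k).trace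
          ≤ Real.sqrt (((Sᵀ * S) ^ 2 ^ (k + 1)).trace)
            * Real.sqrt (((S * Sᵀ) ^ 2 ^ (k + 1)).trace) := by
        have h := trace_CS ((Sᵀ * S) ^ 2 ^ k) ((S * Sᵀ) ^ 2 ^ k)
        rw [Matrix.transpose_pow, Matrix.transpose_pow, symG.eq, symH.eq,
          ← hsplit, ← hsplit] at h
        exact h
      have e3 : Real.sqrt (((Sᵀ * S) ^ 2 ^ (k + 1)).trace)
            * Real.sqrt (((S * Sᵀ) ^ 2 ^ (k + 1)).trace)
          = ((Sᵀ * S) ^ 2 ^ (k + 1)).trace := by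
        rw [trace_pow_mul_comm S Sᵀ (2 ^ (k + 1)) (by positivity)]
        exact Real.mul_self_sqrt (trace_even_pow_nonneg _ symG k)
      calc ((Sᵀ) ^ 2 ^ (k + 1) * S ^ 2 ^ (k + 1)).trace
          = (((S ^ 2)ᵀ) ^ 2 ^ k * (S ^ 2) ^ 2 ^ k).trace := e0
        _ ≤ (((S ^ 2)ᵀ * S ^ 2) ^ 2 ^ k).trace := ihC (S ^ 2)
        _ = (((Sᵀ * S) * (S * Sᵀ)) ^ 2 ^ k).trace := e1
        _ ≤ ((Sᵀ * S) ^ 2 ^ k * (S * Sᵀ) ^ 2 ^ k).trace := ihD _ _ symG symH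
        _ ≤ _ := e2
        _ = _ := e3
    · intro G H hG hH
      have e0 : ((G * H) ^ 2 ^ (k + 1)).trace
          = ((G * H) ^ 2 ^ k * (G * H) ^ 2 ^ k).trace := by rw [← hsplit]
      have e1 : ((G * H) ^ 2 ^ k * (G * H) ^ 2 ^ k).trace
          ≤ (((G * H)ᵀ) ^ 2 ^ k * (G * H) ^ 2 ^ k).trace := by
        have h := trace_CS ((G * H) ^ 2 ^ k) ((G * H) ^ 2 ^ k)
        rw [Real.mul_self_sqrt (trace_transpose_mul_self_nonneg _)] at h
        rw [← Matrix.transpose_pow]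
        exact h
      have e2 : (((G * H)ᵀ * (G * H)) ^ 2 ^ k).trace
          = (((G * G) * (H * H)) ^ 2 ^ k).trace := by
        have : (G * H)ᵀ * (G * H) = H * (G * G) * H := by
          rw [Matrix.transpose_mul, hG.eq, hH.eq]; simp [Matrix.mul_assoc]
        rw [this, trace_pow_conj _ _ _ _ hne]
      have symG2 : (G * G).IsSymm := by
        unfold Matrix.IsSymm; rw [Matrix.transpose_mul, hG.eq]
      have symH2 : (H * H).IsSymm := by
        unfold Matrix.IsSymm; rw [Matrix.transpose_mul, hH.eq]
      calc ((G * H) ^ 2 ^ (k + 1)).trace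
          = ((G * H) ^ 2 ^ k * (G * H) ^ 2 ^ k).trace := e0
        _ ≤ (((G * H)ᵀ) ^ 2 ^ k * (G * H) ^ 2 ^ k).trace := e1
        _ ≤ (((G * H)ᵀ * (G * H)) ^ 2 ^ k).trace := ihC (G * H)
        _ = (((G * G) * (H * H)) ^ 2 ^ k).trace := e2
        _ ≤ ((G * G) ^ 2 ^ k * (H * H) ^ 2 ^ k).trace := ihD _ _ symG2 symH2
        _ = (G ^ 2 ^ (k + 1) * H ^ 2 ^ (k + 1)).trace := by rw [hpow, hpow, sq, sq]


theorem golden_thompson (A B : Matrix m m ℝ) (hA : A.IsSymm) (hB : B.IsSymm) :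
    (exp (A + B)).trace ≤ (exp A * exp B).trace := by
  rcases isEmpty_or_nonempty m with hm | hm
  · simp [Matrix.trace]
  letI : SeminormedRing (Matrix m m ℝ) := Matrix.linftyOpSemiNormedRing
  letI : NormedRing (Matrix m m ℝ) := Matrix.linftyOpNormedRing
  letI : NormOneClass (Matrix m m ℝ) := Matrix.linfty_opNormOneClass
  letI : NormedAlgebra ℝ (Matrix m m ℝ) := Matrix.linftyOpNormedAlgebra
  have hsymexp : ∀ (M : Matrix m m ℝ), M.IsSymm → ∀ c : ℝ, (exp (c • M)).IsSymm := by
    intro M hM c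
    unfold Matrix.IsSymm
    rw [← Matrix.exp_transpose, Matrix.transpose_smul, hM.eq]
  have hexp_pow : ∀ (M : Matrix m m ℝ) (k : ℕ),
      (exp ((((2:ℕ) ^ k : ℕ) : ℝ)⁻¹ • M)) ^ 2 ^ k = exp M := by
    intro M k
    rw [← Matrix.exp_nsmul, ← Nat.cast_smul_eq_nsmul ℝ, smul_smul, mul_inv_cancel₀, one_smul]
    exact Nat.cast_ne_zero.mpr (by positivity)
  set f : ℕ → Matrix m m ℝ := fun k =>
    (exp ((((2:ℕ) ^ k : ℕ) : ℝ)⁻¹ • A) * exp ((((2:ℕ) ^ k : ℕ) : ℝ)⁻¹ • B)) ^ 2 ^ k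
    with hf
  have key : ∀ k : ℕ, (f k).trace ≤ (exp A * exp B).trace := by
    intro k
    have h := (CD k).2 (exp ((((2:ℕ) ^ k : ℕ) : ℝ)⁻¹ • A))
      (exp ((((2:ℕ) ^ k : ℕ) : ℝ)⁻¹ • B))
      (hsymexp A hA _) (hsymexp B hB _)
    rw [hexp_pow A k, hexp_pow B k] at h
    exact h
  have hmat : Tendsto f atTop (𝓝 (exp (A + B))) := by
    refine (tendsto_iff_norm_sub_tendsto_zero).2 ?_
    set K : ℝ := Real.exp (‖A‖ + ‖B‖) * Real.exp (‖A‖ + ‖B‖) * (‖A‖ + ‖B‖) ^ 2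
      * (4 + (‖A‖ + ‖B‖)) with hK
    have hbound : ∀ k : ℕ, ‖f k - exp (A + B)‖ ≤ K * (1 / 2) ^ k := by
      intro k
      rw [norm_sub_rev]
      have h := trotter A B (2 ^ k) (Nat.one_le_two_pow)
      refine h.trans ?_
      rw [div_eq_mul_inv]
      apply mul_le_mul_of_nonneg_left _ (by positivity)
      · rw [one_div, inv_pow]
        push_cast
        norm_num
    have hK0 : Tendsto (fun k : ℕ => K * (1 / 2 : ℝ) ^ k) atTop (𝓝 0) := by
      have := tendsto_pow_atTop_nhds_zero_of_lt_one (by norm_num : (0:ℝ) ≤ 1/2)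
        (by norm_num : (1/2 : ℝ) < 1)
      simpa using this.const_mul K
    exact squeeze_zero (fun k => norm_nonneg _) hbound hK0
  have cont : Continuous (fun M : Matrix m m ℝ => M.trace) :=
    LinearMap.continuous_of_finiteDimensional (Matrix.traceLinearMap m ℝ ℝ)
  have htr : Tendsto (fun k => (f k).trace) atTop (𝓝 ((exp (A + B)).trace)) :=
    ((cont.tendsto _).comp hmat)
  exact le_of_tendsto htr (Eventually.of_forall key)


lemma psd_trace_nonneg {P : Matrix m m ℝ} (hP : P.PosSemidef) : 0 ≤ P.trace := by
  rw [Matrix.trace]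
  apply Finset.sum_nonneg
  intro i _
  have h := hP.dotProduct_mulVec_nonneg (Pi.single i 1)
  simpa [dotProduct, Matrix.mulVec, Pi.single_apply, Finset.sum_ite_eq,
    Finset.sum_ite_eq'] using h

lemma psd_trace_mul_nonneg {A B : Matrix m m ℝ} (hA : A.PosSemidef) (hB : B.PosSemidef) :
    0 ≤ (A * B).trace := by
  obtain ⟨ρ, hρh, hρ2⟩ : ∃ ρ : Matrix m m ℝ, ρᴴ = ρ ∧ ρ * ρ = B :=
    by open scoped MatrixOrder in exact ⟨CFC.sqrt B, (CFC.sqrt_nonneg B).posSemidef.1, CFC.sqrt_mul_sqrt_self B hB.nonneg⟩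
  have e : (A * B).trace = (ρ * A * ρᴴ).trace := by
    rw [hρh, ← hρ2, ← Matrix.mul_assoc, Matrix.trace_mul_cycle]
  rw [e]
  exact psd_trace_nonneg (hA.mul_mul_conjTranspose_same ρ)

/-- Comparison `exp(-η C) ⪯ 1 + (e^{-η}-1) C` for `0 ⪯ C ⪯ 1`. -/
lemma exp_comparison {C : Matrix m m ℝ} (hC0 : C.PosSemidef)
    (hC1 : ((1 : Matrix m m ℝ) - C).PosSemidef) {η : ℝ} (hη : 0 ≤ η) :
    ((1 : Matrix m m ℝ) + (Real.exp (-η) - 1) • C - exp ((-η) • C)).PosSemidef := by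
  have hCh : C.IsHermitian := hC0.1
  set V : Matrix m m ℝ := (hCh.eigenvectorUnitary : Matrix m m ℝ) with hV
  set d : m → ℝ := hCh.eigenvalues with hd
  have hVU : V ∈ Matrix.unitaryGroup m ℝ := hCh.eigenvectorUnitary.2
  have hV1 : V * star V = 1 := (Matrix.mem_unitaryGroup_iff).mp hVU
  have hV2 : star V * V = 1 := (Matrix.mem_unitaryGroup_iff').mp hVU
  have hVunit : IsUnit V := ⟨⟨V, star V, hV1, hV2⟩, rfl⟩
  have hVinv : V⁻¹ = star V := Matrix.inv_eq_left_inv hV2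
  have hspec : C = V * Matrix.diagonal d * star V := by
    have := hCh.spectral_theorem
    simpa [RCLike.ofReal_real_eq_id] using this
  -- eigenvalues in [0,1]
  have hd0 : ∀ i, 0 ≤ d i := hC0.eigenvalues_nonneg
  have hd1 : ∀ i, d i ≤ 1 := by
    intro i
    have hdiag : star V * ((1 : Matrix m m ℝ) - C) * V
        = Matrix.diagonal (fun i => 1 - d i) := by
      rw [Matrix.mul_sub, Matrix.sub_mul, Matrix.mul_one, hV2]
      rw [hspec]
      rw [show star V * (V * Matrix.diagonal d * star V) * V
          = (star V * V) * Matrix.diagonal d * (star V * V) by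
        simp only [Matrix.mul_assoc]]
      rw [hV2, Matrix.one_mul, Matrix.mul_one]
      rw [← Matrix.diagonal_one, Matrix.diagonal_sub]
    have hpsd : (star V * ((1 : Matrix m m ℝ) - C) * V).PosSemidef := by
      have := hC1.conjTranspose_mul_mul_same V
      simpa [Matrix.star_eq_conjTranspose] using this
    rw [hdiag] at hpsd
    have := Matrix.posSemidef_diagonal_iff.mp hpsd i
    linarith
  -- exponential in same basis
  have hsm : ∀ (r : ℝ) (M : Matrix m m ℝ), V * (r • M) * star V = r • (V * M * star V) := by
    intro r M; rw [Matrix.mul_smul, Matrix.smul_mul]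
  have hdiagsm : (-η) • Matrix.diagonal d = Matrix.diagonal (fun i => -η * d i) := by
    rw [← Matrix.diagonal_smul]
    congr 1
  have hexp : exp ((-η) • C) = V * Matrix.diagonal (fun i => Real.exp (-η * d i)) * star V := by
    have h1 : (-η) • C = V * Matrix.diagonal (fun i => -η * d i) * V⁻¹ := by
      rw [hVinv, hspec, ← hdiagsm, hsm]
    rw [h1, Matrix.exp_conj V _ hVunit, Matrix.exp_diagonal, hVinv]
    congr 2
    funext i
    rw [Pi.exp_def, ← Real.exp_eq_exp_ℝ]
  -- the 1 + q C part in same basis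
  have hone : (1 : Matrix m m ℝ) + (Real.exp (-η) - 1) • C
      = V * Matrix.diagonal (fun i => 1 + (Real.exp (-η) - 1) * d i) * star V := by
    rw [hspec]
    rw [show Matrix.diagonal (fun i => 1 + (Real.exp (-η) - 1) * d i)
        = Matrix.diagonal (fun _ : m => (1:ℝ)) + (Real.exp (-η) - 1) • Matrix.diagonal d from by
      rw [← Matrix.diagonal_smul, ← Matrix.diagonal_add]
      congr 1]
    rw [Matrix.mul_add, Matrix.add_mul, Matrix.diagonal_one, Matrix.mul_one, hV1, hsm]
  have hdiff : (1 : Matrix m m ℝ) + (Real.exp (-η) - 1) • C - exp ((-η) • C)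
      = V * Matrix.diagonal
          (fun i => 1 + (Real.exp (-η) - 1) * d i - Real.exp (-η * d i)) * star V := by
    rw [hone, hexp, ← Matrix.sub_mul, ← Matrix.mul_sub, ← Matrix.diagonal_sub]
  rw [hdiff]
  have hg : ∀ i, 0 ≤ 1 + (Real.exp (-η) - 1) * d i - Real.exp (-η * d i) := by
    intro i
    have hx0 := hd0 i
    have hx1 := hd1 i
    have hconv := convexOn_exp.2 (Set.mem_univ (0 : ℝ)) (Set.mem_univ (-η))
      (by linarith : (0:ℝ) ≤ 1 - d i) hx0 (by ring)
    simp only [smul_eq_mul, mul_zero, zero_add, Real.exp_zero, mul_one] at hconv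
    have : Real.exp ((d i) * (-η)) ≤ (1 - d i) + d i * Real.exp (-η) := hconv
    have heq : (d i) * (-η) = -η * d i := by ring
    rw [heq] at this
    nlinarith
  have := (Matrix.PosSemidef.diagonal (fun i => hg i)).mul_mul_conjTranspose_same V
  simpa [Matrix.star_eq_conjTranspose] using this

lemma trace_exp_pos [Nonempty m] {S : Matrix m m ℝ} (hS : S.IsSymm) :
    0 < (exp S).trace := by
  have hhalf : (1/2 : ℝ) • S + (1/2 : ℝ) • S = S := by
    rw [← add_smul]; norm_num
  set T := exp ((1/2 : ℝ) • S) with hT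
  have hsplit : exp S = T * T := by
    rw [← hhalf, Matrix.exp_add_of_commute _ _ (Commute.refl _)]
  have hTs : Tᵀ = T := by
    rw [hT, ← Matrix.exp_transpose, Matrix.transpose_smul, hS.eq]
  have hTne : T ≠ 0 := by
    haveI : Nontrivial (Matrix m m ℝ) := by
      obtain ⟨i⟩ := ‹Nonempty m›
      refine ⟨0, 1, fun h => one_ne_zero (α := ℝ) ?_⟩
      have := congrFun (congrFun h.symm i) i
      simpa [Matrix.one_apply_eq] using this
    exact (Matrix.isUnit_exp _).ne_zero
  have hpos : 0 < (Tᵀ * T).trace := by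
    have heq : (Tᵀ * T).trace = ∑ i, ∑ j, (T j i) ^ 2 := by
      simp [Matrix.trace, Matrix.mul_apply, Matrix.diag, sq]
    rw [heq]
    have : ∃ i j, T i j ≠ 0 := by
      by_contra h
      push_neg at h
      exact hTne (by ext i j; simp [h])
    obtain ⟨i, j, hij⟩ := this
    refine Finset.sum_pos' (fun a _ => Finset.sum_nonneg fun b _ => sq_nonneg _)
      ⟨j, Finset.mem_univ _, ?_⟩
    exact Finset.sum_pos' (fun k _ => sq_nonneg _) ⟨i, Finset.mem_univ _, by positivity⟩
  have hfin := hpos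
  rwa [hTs, ← hsplit] at hfin


end GT14

open GT14

theorem stmt_14 (n : ℕ) (Y C L : Matrix (Fin n) (Fin n) ℝ)
    (hY : Y.PosDef) (hYt : Y.trace = 1)
    (hCs : C.IsSymm) (hC0 : C.PosSemidef)
    (hC1 : ((1 : Matrix (Fin n) (Fin n) ℝ) - C).PosSemidef)
    (η : ℝ) (hη : 0 ≤ η)
    (hLs : L.IsSymm) (hL : NormedSpace.exp L = Y) :
    η * (Y * C).trace - η ^ 2 / 2
      + Real.log ((NormedSpace.exp (L - η • C)).trace) ≤ 0 := by
  rcases Nat.eq_zero_or_pos n with rfl | hn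
  · exfalso
    simp [Matrix.trace] at hYt
  haveI : Nonempty (Fin n) := ⟨⟨0, hn⟩⟩
  have hBs : ((-η) • C).IsSymm := by
    unfold Matrix.IsSymm
    rw [Matrix.transpose_smul, hCs.eq]
  have hsum : L + (-η) • C = L - η • C := by rw [neg_smul, ← sub_eq_add_neg]
  have hGT : (exp (L - η • C)).trace ≤ (Y * exp ((-η) • C)).trace := by
    have h := golden_thompson L ((-η) • C) hLs hBs
    rw [hsum, hL] at h
    exact h
  have htY := hY.posSemidef
  have hpsd := exp_comparison hC0 hC1 hη
  have h2 : 0 ≤ (Y * ((1 : Matrix (Fin n) (Fin n) ℝ)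
      + (Real.exp (-η) - 1) • C - exp ((-η) • C))).trace :=
    psd_trace_mul_nonneg htY hpsd
  have h2' : (Y * exp ((-η) • C)).trace ≤ 1 + (Real.exp (-η) - 1) * (Y * C).trace := by
    rw [Matrix.mul_sub, Matrix.mul_add, Matrix.mul_one, Matrix.mul_smul,
      Matrix.trace_sub, Matrix.trace_add, Matrix.trace_smul, hYt, smul_eq_mul] at h2
    linarith
  have hLC : (L - η • C).IsSymm := by
    unfold Matrix.IsSymm
    rw [Matrix.transpose_sub, Matrix.transpose_smul, hCs.eq, hLs.eq]
  have hrpos : 0 < (exp (L - η • C)).trace := trace_exp_pos hLC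
  have ht0 : 0 ≤ (Y * C).trace := psd_trace_mul_nonneg htY hC0
  have ht1 : (Y * C).trace ≤ 1 := by
    have h := psd_trace_mul_nonneg htY hC1
    rw [Matrix.mul_sub, Matrix.mul_one, Matrix.trace_sub, hYt] at h
    linarith
  have hexp1 : Real.exp (-η) ≤ 1 := Real.exp_le_one_iff.mpr (by linarith)
  have h1qt : 0 < 1 + (Real.exp (-η) - 1) * (Y * C).trace := by
    nlinarith [Real.exp_pos (-η)]
  have hle : (exp (L - η • C)).trace ≤ 1 + (Real.exp (-η) - 1) * (Y * C).trace :=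
    le_trans hGT h2'
  have hlog : Real.log ((exp (L - η • C)).trace)
      ≤ (Real.exp (-η) - 1) * (Y * C).trace := by
    calc Real.log ((exp (L - η • C)).trace)
        ≤ Real.log (1 + (Real.exp (-η) - 1) * (Y * C).trace) :=
          (Real.log_le_log_iff hrpos h1qt).mpr hle
      _ ≤ (1 + (Real.exp (-η) - 1) * (Y * C).trace) - 1 := Real.log_le_sub_one_of_pos h1qt
      _ = (Real.exp (-η) - 1) * (Y * C).trace := by ring
  have hquad : Real.exp (-η) ≤ 1 - η + η ^ 2 / 2 := by
    have hsum3 := Real.sum_le_exp_of_nonneg hη 3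
    have hsum3' : 1 + η + η ^ 2 / 2 ≤ Real.exp η := by
      have : ∑ i ∈ Finset.range 3, η ^ i / (i.factorial : ℝ) = 1 + η + η ^ 2 / 2 := by
        simp [Finset.sum_range_succ, Nat.factorial]
      linarith [hsum3, this.symm.le, this.ge]
    have hmul : Real.exp (-η) * Real.exp η = 1 := by
      rw [← Real.exp_add]; simp
    nlinarith [hmul, hsum3', Real.exp_pos (-η), Real.exp_pos η, sq_nonneg (η ^ 2), sq_nonneg η]
  have hlin : 1 - η ≤ Real.exp (-η) := by
    have := Real.add_one_le_exp (-η)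
    linarith
  nlinarith [hlog, ht0, ht1, hquad, hlin, hη,
    mul_nonneg (by linarith : (0:ℝ) ≤ 1 - (Y * C).trace)
      (by linarith : (0:ℝ) ≤ η + Real.exp (-η) - 1),
    mul_nonneg ht0 (by linarith : (0:ℝ) ≤ η + Real.exp (-η) - 1)]
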